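/- Let ε > 0 and let f : ℝ → ℝ be a function satisfying |f(x + y) − f(x) − f(y)| ≤ ε for all x, y ∈ ℝ, and such that the mapping x ↦ f(cos(x)) + sin(x)·f(x) is locally bounded on ℝ. Then there exist a real number λ and a real derivation χ : ℝ → ℝ such that |f(x) − (χ(x) + λ·x)| ≤ ε for all x ∈ ℝ. -/

import Mathlib

open Real Set

/-- A function `φ` is locally bounded on a set `s` if every point of `s` has a
neighborhood (within `s`) on which `φ` is bounded. -/
def LocallyBoundedOn (φ : ℝ → ℝ) (s : Set ℝ) : Prop :=
  ∀ x ∈ s, ∃ C : ℝ, ∀ᶠ y in nhdsWithin x s, |φ y| ≤ C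

/-- A real-valued function is *regular* on its domain `s` if it is locally bounded,
or continuous, or Lebesgue measurable on `s`. -/
def RegularOn (φ : ℝ → ℝ) (s : Set ℝ) : Prop :=
  LocallyBoundedOn φ s ∨ ContinuousOn φ s ∨ Measurable (s.restrict φ)

/-- A real derivation: an additive function satisfying the Leibniz rule. -/
def IsRealDerivation (χ : ℝ → ℝ) : Prop :=
  (∀ x y : ℝ, χ (x + y) = χ x + χ y) ∧ (∀ x y : ℝ, χ (x * y) = x * χ y + y * χ x)

/-- Hyers' theorem. -/
lemma hyers (ε : ℝ) (f : ℝ → ℝ)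
    (hf : ∀ x y : ℝ, |f (x + y) - f x - f y| ≤ ε) :
    ∃ g : ℝ → ℝ, (∀ x y, g (x + y) = g x + g y) ∧ ∀ x, |f x - g x| ≤ ε := by
  have hε : 0 ≤ ε := le_trans (abs_nonneg _) (hf 0 0)
  set a : ℝ → ℕ → ℝ := fun x n => f (2 ^ n * x) / 2 ^ n with ha
  have hstep : ∀ x n, dist (a x n) (a x (n + 1)) ≤ (ε / 2) * (1 / 2) ^ n := by
    intro x n
    have h2 : (0:ℝ) < 2 ^ (n+1) := by positivity
    have key := hf (2 ^ n * x) (2 ^ n * x)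
    have he : (2:ℝ) ^ n * x + 2 ^ n * x = 2 ^ (n+1) * x := by ring
    rw [he] at key
    rw [Real.dist_eq, ha]
    simp only
    have heq : f (2^n*x)/2^n - f (2^(n+1)*x)/2^(n+1)
        = -(f (2^(n+1)*x) - f (2^n*x) - f (2^n*x))/2^(n+1) := by
      field_simp; ring
    rw [heq, abs_div, abs_neg, abs_of_pos h2, div_le_iff₀ h2]
    refine le_of_le_of_eq key ?_
    have h3 : (1/2:ℝ)^n * 2^(n+1) = 2 := by
      rw [div_pow, one_pow, pow_succ]; field_simp
    rw [mul_assoc, h3]; ring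
  have hcauchy : ∀ x, CauchySeq (a x) := fun x =>
    cauchySeq_of_le_geometric (1/2) (ε/2) (by norm_num) (hstep x)
  choose g hg using fun x => cauchySeq_tendsto_of_complete (hcauchy x)
  refine ⟨g, ?_, ?_⟩
  · intro x y
    have h1 : Filter.Tendsto (fun n => a x n + a y n) Filter.atTop (nhds (g x + g y)) :=
      (hg x).add (hg y)
    have h2 : Filter.Tendsto (fun n => a (x + y) n - (a x n + a y n)) Filter.atTop (nhds 0) := by
      have hb : ∀ n, |a (x + y) n - (a x n + a y n)| ≤ ε * (1/2) ^ n := by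
        intro n
        have h2 : (0:ℝ) < 2 ^ n := by positivity
        have he : (2:ℝ) ^ n * (x + y) = 2 ^ n * x + 2 ^ n * y := by ring
        simp only [ha, he]
        rw [← add_div, ← sub_div, abs_div, abs_of_pos h2, div_le_iff₀ h2]
        have : ε * (1/2) ^ n * 2 ^ n = ε := by
          rw [div_pow, one_pow]; field_simp
        rw [this]
        have := hf (2 ^ n * x) (2 ^ n * y)
        calc |f (2 ^ n * x + 2 ^ n * y) - (f (2 ^ n * x) + f (2 ^ n * y))|
            = |f (2 ^ n * x + 2 ^ n * y) - f (2 ^ n * x) - f (2 ^ n * y)| := by ring_nf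
          _ ≤ ε := this
      have htend : Filter.Tendsto (fun n : ℕ => ε * (1/2:ℝ) ^ n) Filter.atTop (nhds 0) := by
        simpa using (tendsto_pow_atTop_nhds_zero_of_lt_one (by norm_num : (0:ℝ) ≤ 1/2)
          (by norm_num : (1/2:ℝ) < 1)).const_mul ε
      refine squeeze_zero_norm (fun n => ?_) htend
      simpa [Real.norm_eq_abs] using hb n
    have h3 : Filter.Tendsto (a (x + y)) Filter.atTop (nhds (g x + g y)) := by
      have := h2.add h1
      simpa using this
    exact tendsto_nhds_unique (hg (x + y)) h3
  · intro x
    have hb : ∀ n, |a x n - a x 0| ≤ ε * (1 - (1/2) ^ n) := by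
      intro n
      induction n with
      | zero => simp
      | succ n ih =>
        calc |a x (n+1) - a x 0| ≤ |a x (n+1) - a x n| + |a x n - a x 0| := by
              have := abs_sub_abs_le_abs_sub (a x (n+1) - a x 0) (a x n - a x 0)
              calc |a x (n+1) - a x 0| = |(a x (n+1) - a x n) + (a x n - a x 0)| := by ring_nf
                _ ≤ _ := abs_add_le _ _
          _ ≤ ε / 2 * (1/2) ^ n + ε * (1 - (1/2) ^ n) := by
              gcongr
              · have := hstep x n; rw [Real.dist_eq, abs_sub_comm] at this; exact this
          _ = ε * (1 - (1/2) ^ (n+1)) := by ring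
    have h0 : a x 0 = f x := by simp [ha]
    have h1 : Filter.Tendsto (fun n => |a x n - a x 0|) Filter.atTop (nhds (|g x - f x|)) := by
      rw [← h0]
      exact ((hg x).sub tendsto_const_nhds).abs
    have h2 : Filter.Tendsto (fun n : ℕ => ε * (1 - (1/2:ℝ) ^ n)) Filter.atTop (nhds ε) := by
      have := (tendsto_pow_atTop_nhds_zero_of_lt_one (by norm_num : (0:ℝ) ≤ 1/2)
          (by norm_num : (1/2:ℝ) < 1))
      have := ((tendsto_const_nhds (x := (1:ℝ))).sub this).const_mul ε
      simpa using this
    have := le_of_tendsto_of_tendsto' h1 h2 hb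
    rwa [abs_sub_comm]

section helpers

variable (g : ℝ → ℝ) (hg : ∀ x y, g (x + y) = g x + g y)

include hg

lemma g_zero : g 0 = 0 := by have := hg 0 0; simp at this; linarith

lemma g_neg : ∀ x, g (-x) = - g x := by
  intro x
  have := hg x (-x)
  simp at this
  have h0 := g_zero g hg
  rw [h0] at this
  linarith

lemma g_sub : ∀ x y, g (x - y) = g x - g y := by
  intro x y
  have := hg (x - y) y
  rw [sub_add_cancel] at this
  linarith

lemma g_nat : ∀ (n : ℕ) (x : ℝ), g ((n:ℝ) * x) = (n:ℝ) * g x := by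
  intro n x
  induction n with
  | zero => simpa using g_zero g hg
  | succ n ih =>
    have : ((n:ℝ) + 1) * x = (n:ℝ) * x + x := by ring
    push_cast
    rw [this, hg, ih]
    ring

end helpers


lemma abs_sub' (a b : ℝ) : |a - b| ≤ |a| + |b| := by
  rw [sub_eq_add_neg]
  exact (abs_add_le _ _).trans (by rw [abs_neg])

lemma additive_bounded_linear (A : ℝ → ℝ) (hA : ∀ x y, A (x + y) = A x + A y)
    (c M : ℝ) (hc : 0 < c) (hb : ∀ y : ℝ, |y| ≤ c → |A y| ≤ M) :
    ∀ y, A y = A 1 * y := by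
  set G : ℝ →+ ℝ := AddMonoidHom.mk' A hA with hG
  have hGA : ∀ x, G x = A x := fun x => rfl
  have hq : ∀ (q : ℚ) (x : ℝ), A ((q:ℝ) * x) = (q:ℝ) * A x := by
    intro q x
    have := map_ratCast_smul G ℝ ℝ q x
    simpa [smul_eq_mul, hGA] using this
  have hn : ∀ (n : ℕ) (x : ℝ), A ((n:ℝ) * x) = (n:ℝ) * A x := by
    intro n x
    have := hq (n : ℚ) x
    simpa using this
  have key : ∀ y : ℝ, ∀ n : ℕ, 0 < n → |A y - A 1 * y| ≤ (M + |A 1| * c) / n := by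
    intro y n hn0
    have hnp : (0:ℝ) < n := by exact_mod_cast hn0
    obtain ⟨q, hq'⟩ := exists_rat_near y (show (0:ℝ) < c / n by positivity)
    have h1 : A y = A (y - (q:ℝ)) + (q:ℝ) * A 1 := by
      have := hA (y - (q:ℝ)) (q:ℝ)
      have h2 : A (q:ℝ) = (q:ℝ) * A 1 := by simpa using hq q 1
      rw [sub_add_cancel] at this
      rw [this, h2]
    have h3 : |A (y - (q:ℝ))| ≤ M / n := by
      have h4 : |(n:ℝ) * (y - (q:ℝ))| ≤ c := by
        rw [abs_mul, abs_of_pos hnp]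
        calc (n:ℝ) * |y - (q:ℝ)| ≤ (n:ℝ) * (c / n) := by
              exact mul_le_mul_of_nonneg_left (le_of_lt hq') (le_of_lt hnp)
          _ = c := by field_simp
      have h5 := hb _ h4
      rw [hn n (y - (q:ℝ)), abs_mul, abs_of_pos hnp] at h5
      rw [le_div_iff₀ hnp]
      linarith
    calc |A y - A 1 * y| = |A (y - (q:ℝ)) + ((q:ℝ) - y) * A 1| := by rw [h1]; ring_nf
      _ ≤ |A (y - (q:ℝ))| + |((q:ℝ) - y) * A 1| := abs_add_le _ _
      _ ≤ M / n + (c / n) * |A 1| := by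
          gcongr
          rw [abs_mul]
          exact mul_le_mul_of_nonneg_right (by rw [abs_sub_comm]; exact le_of_lt hq')
            (abs_nonneg _)
      _ = (M + |A 1| * c) / n := by field_simp
  intro y
  by_contra hne
  have hd : 0 < |A y - A 1 * y| := abs_pos.mpr (sub_ne_zero.mpr hne)
  obtain ⟨n, hn'⟩ := exists_nat_gt ((M + |A 1| * c) / |A y - A 1 * y|)
  have hn0 : 0 < n := by
    by_contra h
    push_neg at h
    interval_cases n
    · simp at hn'
      have hM : 0 ≤ M := le_trans (abs_nonneg _) (hb 0 (by simpa using le_of_lt hc))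
      have : (0:ℝ) ≤ (M + |A 1| * c) / |A y - A 1 * y| := by positivity
      linarith
  have := key y n hn0
  have hnp : (0:ℝ) < n := by exact_mod_cast hn0
  rw [div_lt_iff₀ hd] at hn'
  rw [le_div_iff₀ hnp] at this
  nlinarith

/-- The biadditive "Leibniz defect". -/
def BF (g : ℝ → ℝ) (x y : ℝ) : ℝ := g (x * y) - x * g y - y * g x

noncomputable def psiF (g : ℝ → ℝ) (x : ℝ) : ℝ := g (Real.cos x) + Real.sin x * g x

noncomputable def hF (g : ℝ → ℝ) (x : ℝ) : ℝ := g (Real.sin x) - Real.cos x * g x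

section core

variable (g : ℝ → ℝ) (hg : ∀ x y, g (x + y) = g x + g y)

include hg

lemma BF_neg_right : ∀ t s, BF g t (-s) = -(BF g t s) := by
  intro t s
  simp only [BF]
  rw [show t * (-s) = -(t*s) by ring, g_neg g hg, g_neg g hg]
  ring

lemma BF_identity : ∀ x y, BF g (Real.cos x) (Real.cos y) - BF g (Real.sin x) (Real.sin y)
    = psiF g (x+y) - Real.cos y * psiF g x - Real.cos x * psiF g y
      + Real.sin y * hF g x + Real.sin x * hF g y := by
  intro x y
  simp only [BF, psiF, hF]
  rw [Real.cos_add, Real.sin_add, g_sub g hg, hg x y]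
  ring

lemma hF_eq : ∀ x, hF g x = Real.cos x * g (π/2) - psiF g (x + π/2) := by
  intro x
  simp only [hF, psiF]
  rw [Real.cos_add_pi_div_two, Real.sin_add_pi_div_two, g_neg g hg, hg x (π/2)]
  ring

lemma BF_polar : ∀ t s, BF g (t+s) (t+s) = BF g t t + 2 * BF g t s + BF g s s := by
  intro t s
  simp only [BF]
  rw [show (t+s)*(t+s) = t*t + (t*s + (t*s + s*s)) by ring, hg, hg, hg, hg t s]
  ring

lemma BF_add_right : ∀ t y y', BF g t (y + y') = BF g t y + BF g t y' := by
  intro t y y'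
  simp only [BF]
  rw [show t * (y + y') = t*y + t*y' by ring, hg, hg y y']
  ring

lemma BF_nat : ∀ (n : ℕ) (u y : ℝ), BF g ((n:ℝ) * u) y = (n:ℝ) * BF g u y := by
  intro n u y
  simp only [BF]
  rw [show ((n:ℝ) * u) * y = (n:ℝ) * (u*y) by ring, g_nat g hg, g_nat g hg]
  ring

omit hg in lemma BF_one : ∀ t, BF g t 1 = -(g 1) * t := by
  intro t
  simp only [BF]
  rw [mul_one]
  ring

end core

lemma BF_eq_of_bounds (g : ℝ → ℝ) (hg : ∀ x y, g (x + y) = g x + g y)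
    (C₁ C₂ δ₀ δ₁ : ℝ) (hδ₀ : 0 < δ₀) (hδ₁ : 0 < δ₁)
    (hb0 : ∀ y : ℝ, |y| < δ₀ → |psiF g y| ≤ C₁)
    (hbp : ∀ y : ℝ, |y - π/2| < δ₁ → |psiF g y| ≤ C₂) :
    ∀ x y : ℝ, BF g x y = -(g 1) * x * y := by
  set δ : ℝ := min (min (δ₀/3) (δ₁/2)) 1 with hδdef
  have hδpos : 0 < δ := by
    apply lt_min (lt_min (by linarith) (by linarith)) one_pos
  have hδ1 : δ ≤ 1 := min_le_right _ _
  have hδa : δ ≤ δ₀/3 := le_trans (min_le_left _ _) (min_le_left _ _)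
  have hδb : δ ≤ δ₁/2 := le_trans (min_le_left _ _) (min_le_right _ _)
  have hδhalfpi : δ < π/2 := lt_of_le_of_lt hδ1 (by
    have := Real.pi_gt_three
    linarith)
  set H : ℝ := |g (π/2)| + C₂ with hHdef
  set M : ℝ := 3*C₁ + 2*H with hMdef
  -- bound on h near 0
  have hhb : ∀ x : ℝ, |x| ≤ δ → |hF g x| ≤ H := by
    intro x hx
    rw [hF_eq g hg]
    have h1 : |x + π/2 - π/2| < δ₁ := by
      rw [add_sub_cancel_right]
      exact lt_of_le_of_lt hx (by linarith)
    have h2 := hbp _ h1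
    calc |Real.cos x * g (π/2) - psiF g (x + π/2)|
        ≤ |Real.cos x * g (π/2)| + |psiF g (x + π/2)| := abs_sub' _ _
      _ ≤ |g (π/2)| + C₂ := by
          have hc : |Real.cos x * g (π/2)| ≤ |g (π/2)| := by
            rw [abs_mul]
            calc |Real.cos x| * |g (π/2)| ≤ 1 * |g (π/2)| :=
                  mul_le_mul_of_nonneg_right (Real.abs_cos_le_one x) (abs_nonneg _)
              _ = |g (π/2)| := one_mul _
          linarith
  -- bound on D ∘ sin near 0
  have hDsin : ∀ x : ℝ, |x| ≤ δ → |BF g (Real.sin x) (Real.sin x)| ≤ M := by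
    intro x hx
    have hb2x : |psiF g (x + x)| ≤ C₁ := by
      apply hb0
      calc |x + x| ≤ |x| + |x| := abs_add_le _ _
        _ ≤ δ + δ := by gcongr
        _ < δ₀ := by linarith
    have hbx : |psiF g x| ≤ C₁ := hb0 x (lt_of_le_of_lt hx (by linarith))
    have hbnx : |psiF g (-x)| ≤ C₁ := by
      apply hb0; rw [abs_neg]; exact lt_of_le_of_lt hx (by linarith)
    have hb00 : |psiF g 0| ≤ C₁ := hb0 0 (by simpa using hδ₀)
    have hhx : |hF g x| ≤ H := hhb x hx
    have hhnx : |hF g (-x)| ≤ H := by apply hhb; rwa [abs_neg]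
    have eq1 := BF_identity g hg x x
    have eq2 := BF_identity g hg x (-x)
    rw [Real.cos_neg, Real.sin_neg, BF_neg_right g hg, add_neg_cancel] at eq2
    -- 2 * D(sin x) = RHS2 - RHS1
    have heq : 2 * BF g (Real.sin x) (Real.sin x)
        = (psiF g 0 - Real.cos x * psiF g x - Real.cos x * psiF g (-x)
            - Real.sin x * hF g x + Real.sin x * hF g (-x))
          - (psiF g (x + x) - Real.cos x * psiF g x - Real.cos x * psiF g x
            + Real.sin x * hF g x + Real.sin x * hF g x) := by
      rw [← eq1]
      have : BF g (Real.cos x) (Real.cos x) + BF g (Real.sin x) (Real.sin x)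
          = psiF g 0 - Real.cos x * psiF g x - Real.cos x * psiF g (-x)
            - Real.sin x * hF g x + Real.sin x * hF g (-x) := by
        linarith [eq2]
      rw [← this]; ring
    have habs : ∀ a b : ℝ, |b| ≤ C₁ → |Real.cos a * b| ≤ C₁ := by
      intro a b hb
      rw [abs_mul]
      calc |Real.cos a| * |b| ≤ 1 * C₁ :=
            mul_le_mul (Real.abs_cos_le_one a) hb (abs_nonneg _) zero_le_one
        _ = C₁ := one_mul _
    have habs' : ∀ a b : ℝ, |b| ≤ H → |Real.sin a * b| ≤ H := by
      intro a b hb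
      rw [abs_mul]
      calc |Real.sin a| * |b| ≤ 1 * H :=
            mul_le_mul (Real.abs_sin_le_one a) hb (abs_nonneg _) zero_le_one
        _ = H := one_mul _
    have p1 := abs_le.mp (habs x _ hbx)
    have p2 := abs_le.mp (habs x _ hbnx)
    have p3 := abs_le.mp (habs' x _ hhx)
    have p4 := abs_le.mp (habs' x _ hhnx)
    have p5 := abs_le.mp hb00
    have p6 := abs_le.mp hb2x
    have h2M : |2 * BF g (Real.sin x) (Real.sin x)| ≤ 2 * M := by
      rw [heq]
      rw [abs_le]
      constructor
      · rw [hMdef]; linarith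
      · rw [hMdef]; linarith
    rw [abs_mul, abs_two] at h2M
    linarith
  -- D bounded on [-sin δ, sin δ]
  have hsinδ : 0 < Real.sin δ := Real.sin_pos_of_pos_of_lt_pi hδpos
    (by have := Real.pi_gt_three; linarith)
  have hD : ∀ t : ℝ, |t| ≤ Real.sin δ → |BF g t t| ≤ M := by
    intro t ht
    have ht1 : -1 ≤ t := by
      have := Real.sin_le_one δ
      have := abs_le.mp ht
      linarith
    have ht2 : t ≤ 1 := by
      have := Real.sin_le_one δ
      have := abs_le.mp ht
      linarith
    have harc : Real.sin (Real.arcsin t) = t := Real.sin_arcsin ht1 ht2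
    have harcb : |Real.arcsin t| ≤ δ := by
      rw [abs_le]
      constructor
      · have : Real.arcsin (-(Real.sin δ)) ≤ Real.arcsin t := by
          exact Real.monotone_arcsin (by linarith [abs_le.mp ht])
        rwa [← Real.sin_neg, Real.arcsin_sin (by linarith) (by linarith)] at this
      · have : Real.arcsin t ≤ Real.arcsin (Real.sin δ) := by
          exact Real.monotone_arcsin (by linarith [abs_le.mp ht])
        rwa [Real.arcsin_sin (by linarith) (by linarith)] at this
    have := hDsin (Real.arcsin t) harcb
    rwa [harc] at this
  -- B bounded on the square
  have hMnn : 0 ≤ M := le_trans (abs_nonneg _) (hD 0 (by simpa using le_of_lt hsinδ))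
  set c : ℝ := Real.sin δ / 2 with hcdef
  have hcpos : 0 < c := by positivity
  have hBsq : ∀ t s : ℝ, |t| ≤ c → |s| ≤ c → |BF g t s| ≤ 2 * M := by
    intro t s ht hs
    have hpol := BF_polar g hg t s
    have h1 : |BF g (t+s) (t+s)| ≤ M := by
      apply hD
      calc |t + s| ≤ |t| + |s| := abs_add_le _ _
        _ ≤ c + c := by gcongr
        _ = Real.sin δ := by rw [hcdef]; ring
    have h2 : |BF g t t| ≤ M := hD t (le_trans ht (by linarith))
    have h3 : |BF g s s| ≤ M := hD s (le_trans hs (by linarith))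
    have e : BF g t s = (BF g (t+s) (t+s) - BF g t t - BF g s s) / 2 := by
      rw [hpol]; ring
    rw [e]
    rw [abs_div, abs_two, div_le_iff₀ (by norm_num : (0:ℝ) < 2)]
    calc |BF g (t+s) (t+s) - BF g t t - BF g s s|
        ≤ |BF g (t+s) (t+s) - BF g t t| + |BF g s s| := abs_sub' _ _
      _ ≤ (|BF g (t+s) (t+s)| + |BF g t t|) + |BF g s s| := by
          gcongr; exact abs_sub' _ _
      _ ≤ M + M + M := by gcongr
      _ ≤ 2 * M * 2 := by linarith
  -- small-argument linearity
  have hsmall : ∀ t : ℝ, |t| ≤ c → ∀ y : ℝ, BF g t y = -(g 1) * t * y := by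
    intro t ht y
    have hlin := additive_bounded_linear (fun y => BF g t y)
      (fun a b => BF_add_right g hg t a b) c (2*M) hcpos
      (fun s hs => hBsq t s ht hs) y
    rw [hlin, BF_one]
  -- general case by ℕ-scaling
  intro x y
  obtain ⟨n, hn⟩ := exists_nat_gt (|x| / c)
  have hn0 : 0 < n := by
    by_contra h
    push_neg at h
    interval_cases n
    simp at hn
    have : 0 ≤ |x| / c := by positivity
    linarith
  have hnp : (0:ℝ) < n := by exact_mod_cast hn0
  have hxn : |x / (n:ℝ)| ≤ c := by
    rw [abs_div, abs_of_pos hnp, div_le_iff₀ hnp]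
    rw [div_lt_iff₀ hcpos] at hn
    nlinarith
  have h1 : BF g ((n:ℝ) * (x / n)) y = (n:ℝ) * BF g (x/n) y := BF_nat g hg n _ y
  have h2 : (n:ℝ) * (x / n) = x := by field_simp
  rw [h2] at h1
  rw [h1, hsmall _ hxn y]
  field_simp

theorem stmt_13 (ε : ℝ) (hε : 0 < ε) (f : ℝ → ℝ)
    (hf : ∀ x y : ℝ, |f (x + y) - f x - f y| ≤ ε)
    (hlb : LocallyBoundedOn (fun x : ℝ => f (Real.cos x) + Real.sin x * f x) Set.univ) :
    ∃ (l : ℝ) (χ : ℝ → ℝ), IsRealDerivation χ ∧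
      ∀ x : ℝ, |f x - (χ x + l * x)| ≤ ε := by
  obtain ⟨g, hgadd, hfg⟩ := hyers ε f hf
  -- transfer local boundedness to psiF g
  have hpsi : ∀ x : ℝ, |psiF g x - (f (Real.cos x) + Real.sin x * f x)| ≤ 2 * ε := by
    intro x
    have h1 : |g (Real.cos x) - f (Real.cos x)| ≤ ε := by
      rw [abs_sub_comm]; exact hfg _
    have h2 : |Real.sin x * (g x - f x)| ≤ ε := by
      rw [abs_mul]
      calc |Real.sin x| * |g x - f x| ≤ 1 * ε :=
            mul_le_mul (Real.abs_sin_le_one x) (by rw [abs_sub_comm]; exact hfg x)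
              (abs_nonneg _) zero_le_one
        _ = ε := one_mul _
    calc |psiF g x - (f (Real.cos x) + Real.sin x * f x)|
        = |(g (Real.cos x) - f (Real.cos x)) + Real.sin x * (g x - f x)| := by
          simp only [psiF]; ring_nf
      _ ≤ |g (Real.cos x) - f (Real.cos x)| + |Real.sin x * (g x - f x)| := abs_add_le _ _
      _ ≤ 2 * ε := by linarith
  have hloc : ∀ a : ℝ, ∃ C δ : ℝ, 0 < δ ∧ ∀ y : ℝ, |y - a| < δ → |psiF g y| ≤ C := by
    intro a
    obtain ⟨C, hev⟩ := hlb a (Set.mem_univ a)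
    rw [nhdsWithin_univ, Metric.eventually_nhds_iff] at hev
    obtain ⟨δ, hδ, hball⟩ := hev
    refine ⟨C + 2 * ε, δ, hδ, fun y hy => ?_⟩
    have h1 := hball (show dist y a < δ by rwa [Real.dist_eq])
    have h2 := hpsi y
    calc |psiF g y| = |(psiF g y - (f (Real.cos y) + Real.sin y * f y))
          + (f (Real.cos y) + Real.sin y * f y)| := by ring_nf
      _ ≤ _ + _ := abs_add_le _ _
      _ ≤ C + 2 * ε := by linarith
  obtain ⟨C₁, δ₀, hδ₀, hb0⟩ := hloc 0
  obtain ⟨C₂, δ₁, hδ₁, hbp⟩ := hloc (π/2)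
  have hB := BF_eq_of_bounds g hgadd C₁ C₂ δ₀ δ₁ hδ₀ hδ₁
    (fun y hy => hb0 y (by rwa [sub_zero])) hbp
  refine ⟨g 1, fun x => g x - g 1 * x, ⟨?_, ?_⟩, ?_⟩
  · intro x y
    simp only [hgadd x y]; ring
  · intro x y
    have := hB x y
    simp only [BF] at this
    simp only []
    linear_combination this
  · intro x
    simp only []
    have h : g x - g 1 * x + g 1 * x = g x := by ring
    rw [h]
    exact hfg x
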